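/- arXiv:2008.07233 — 3 statements merged into one kernel-verified Lean document; each statement's English description precedes it below -/
import Mathlib

section
/- Let Σ be a finite alphabet and let I ⊆ I' be two irreflexive symmetric relations on Σ. Let M = M(Σ,I) and N = M(Σ,I') be the corresponding trace monoids and π : M → N the canonical surjective monoid homomorphism (identity on letters). Then for every ω ∈ M, the restriction of π to the set {x ∈ M | x ≤ ω} of left divisors of ω is injective. -/
open scoped Classical

section TracePre

variable {A : Type*}

/-- The elementary swap relation from an independence relation. -/
def swapRel (I : A → A → Prop) : FreeMonoid A → FreeMonoid A → Prop :=
  fun x y => ∃ a b, I a b ∧ x = FreeMonoid.of a * FreeMonoid.of b ∧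
    y = FreeMonoid.of b * FreeMonoid.of a

/-- The congruence generated by the commutations. -/
def traceCon (I : A → A → Prop) : Con (FreeMonoid A) := conGen (swapRel I)

/-- The trace monoid `M(A, I)`. -/
abbrev TraceMonoid (A : Type*) (I : A → A → Prop) := (traceCon I).Quotient

/-- Image of a letter in the trace monoid. -/
def trOf (I : A → A → Prop) (a : A) : TraceMonoid A I := (traceCon I).mk' (FreeMonoid.of a)

theorem traceCon_le_ker {M : Type*} [CommMonoid M] {I : A → A → Prop}
    (φ : FreeMonoid A →* M) : traceCon I ≤ Con.ker φ := by
  apply Con.conGen_le.mpr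
  rintro x y ⟨a, b, _, rfl, rfl⟩
  simp [Con.ker_rel, map_mul, mul_comm]

/-- Length of a trace. -/
noncomputable def trLen {I : A → A → Prop} (x : TraceMonoid A I) : ℕ :=
  Multiplicative.toAdd
    ((Con.lift (traceCon I) (FreeMonoid.lift fun _ => Multiplicative.ofAdd (1 : ℕ))
      (traceCon_le_ker _)) x)

/-- Number of occurrences of the letter `a` in a trace. -/
noncomputable def trCount {I : A → A → Prop} (a : A) (x : TraceMonoid A I) : ℕ :=
  Multiplicative.toAdd
    ((Con.lift (traceCon I)
      (FreeMonoid.lift fun b => Multiplicative.ofAdd (if b = a then (1 : ℕ) else 0))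
      (traceCon_le_ker _)) x)

/-- Lists of pairwise distinct, pairwise independent letters. -/
def IsCliqueList (I : A → A → Prop) (l : List A) : Prop :=
  l.Pairwise fun a b => a ≠ b ∧ I a b

/-- The trace associated with a list of letters. -/
def listProd (I : A → A → Prop) (l : List A) : TraceMonoid A I := (l.map (trOf I)).prod

/-- A clique of the trace monoid. -/
def IsClique (I : A → A → Prop) (x : TraceMonoid A I) : Prop :=
  ∃ l, IsCliqueList I l ∧ x = listProd I l

/-- The trace associated with a finite set of letters. -/
noncomputable def fprod (I : A → A → Prop) (c : Finset A) : TraceMonoid A I :=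
  listProd I c.toList

/-- Normal pairs of cliques, cliques being represented by finite sets of letters. -/
def NormalF (I : A → A → Prop) (c d : Finset A) : Prop :=
  ∀ b ∈ d, ∃ a ∈ c, (¬ I a b ∨ a = b)

/-- Greatest lower bound for left divisibility. -/
def IsGlbDvd {M : Type*} [Monoid M] (x y g : M) : Prop :=
  g ∣ x ∧ g ∣ y ∧ ∀ w, w ∣ x → w ∣ y → w ∣ g

/-- Least upper bound for left divisibility. -/
def IsLubDvd {M : Type*} [Monoid M] (x y z : M) : Prop :=
  x ∣ z ∧ y ∣ z ∧ ∀ w, x ∣ w → y ∣ w → z ∣ w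

end TracePre

section CSPre

variable {A X : Type*}

/-- A concurrent system: a right action of a trace monoid on `X ∪ {⊥}`,
`⊥` being encoded by `none`. -/
structure CS (A : Type*) (I : A → A → Prop) (X : Type*) where
  act : Option X → TraceMonoid A I → Option X
  act_one : ∀ s, act s 1 = s
  act_mul : ∀ s x y, act s (x * y) = act (act s x) y
  act_bot : ∀ x, act none x = none

variable {I : A → A → Prop}

/-- The letter `a` is enabled at state `α`. -/
def CS.Enabled (S : CS A I X) (α : X) (a : A) : Prop := S.act (some α) (trOf I a) ≠ none

/-- The set of executions starting from `α`. -/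
def CS.MSet (S : CS A I X) (α : X) : Set (TraceMonoid A I) :=
  {x | S.act (some α) x ≠ none}

/-- A deterministic concurrent system: any two letters enabled at a common state
commute. -/
def CS.Deterministic (S : CS A I X) : Prop :=
  ∀ (α : X) (a b : A), a ≠ b → S.Enabled α a → S.Enabled α b → I a b

/-- The finite set of letters enabled at an extended state. -/
noncomputable def CS.enabledFinset [Fintype A] (S : CS A I X) (s : Option X) : Finset A :=
  Finset.univ.filter fun a => S.act s (trOf I a) ≠ none

/-- A generalised execution from `α`, as an infinite normal sequence of cliques
all of whose finite prefixes are executions. -/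
def CS.IsGenExec (S : CS A I X) (α : X) (c : ℕ → Finset A) : Prop :=
  (∀ i, (↑(c i) : Set A).Pairwise I) ∧ (∀ i, NormalF I (c i) (c (i + 1))) ∧
    ∀ k, S.act (some α) (((List.range k).map fun i => fprod I (c i)).prod) ≠ none

/-- An infinite execution from `α`: a generalised execution with all cliques nonempty. -/
def CS.IsInfExec (S : CS A I X) (α : X) (c : ℕ → Finset A) : Prop :=
  S.IsGenExec α c ∧ ∀ i, c i ≠ ∅

end CSPre

/-- The canonical projection between trace monoids induced by enlarging the
independence relation (identity on letters). -/
def traceMap {A : Type*} {I I' : A → A → Prop} (hsub : ∀ a b, I a b → I' a b) :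
    TraceMonoid A I →* TraceMonoid A I' :=
  Con.lift _ (traceCon I').mk' (by
    rw [Con.mk'_ker]
    apply Con.conGen_le.mpr
    rintro x y ⟨a, b, hab, rfl, rfl⟩
    exact ConGen.Rel.of _ _ ⟨a, b, hsub a b hab, rfl, rfl⟩)

namespace Stmt0Aux

variable {A : Type*} {I : A → A → Prop}

/-- trace of a word -/
def mk (I : A → A → Prop) (w : List A) : TraceMonoid A I := (traceCon I).mk' (FreeMonoid.ofList w)

lemma mk_cons (c : A) (w : List A) : mk I (c :: w) = trOf I c * mk I w := by
  show (traceCon I).mk' (FreeMonoid.ofList (c :: w)) = _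
  rw [show FreeMonoid.ofList (c :: w) = FreeMonoid.of c * FreeMonoid.ofList w from rfl, map_mul]
  rfl

lemma mk_append (u v : List A) : mk I (u ++ v) = mk I u * mk I v := by
  show (traceCon I).mk' (FreeMonoid.ofList (u ++ v)) = _
  rw [show FreeMonoid.ofList (u ++ v) = FreeMonoid.ofList u * FreeMonoid.ofList v from rfl,
    map_mul]
  rfl

lemma mk_surjective : Function.Surjective (mk I) := fun x => by
  obtain ⟨w, rfl⟩ := Con.mk'_surjective x
  exact ⟨w.toList, by simp [mk, FreeMonoid.ofList_toList]⟩

/-- word-level congruence -/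
def R (I : A → A → Prop) (u v : List A) : Prop :=
  traceCon I (FreeMonoid.ofList u) (FreeMonoid.ofList v)

lemma mk_eq_mk {u v : List A} (h : R I u v) : mk I u = mk I v := (traceCon I).eq.mpr h

lemma r_of_mk_eq {u v : List A} (h : mk I u = mk I v) : R I u v := (traceCon I).eq.mp h

/-- counts are invariant -/
lemma count_eq_of_rel {x y : FreeMonoid A} (h : traceCon I x y) (b : A) :
    x.toList.count b = y.toList.count b := by
  induction h with
  | of u v huv =>
    obtain ⟨c, d, _, rfl, rfl⟩ := huv
    simp [FreeMonoid.toList_mul, FreeMonoid.toList_of, List.count_cons]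
    omega
  | refl => rfl
  | symm _ ih => omega
  | trans _ _ ih1 ih2 => omega
  | mul _ _ ih1 ih2 => simp [FreeMonoid.toList_mul, List.count_append, ih1, ih2]

/-- the extraction function: `F I a w = some u` iff `a` can be moved to the front of `w`,
with remainder `u`. -/
noncomputable def F (I : A → A → Prop) (a : A) : List A → Option (List A)
  | [] => none
  | c :: w => if c = a then some w else if I a c then (F I a w).map (c :: ·) else none

/-- Transparency: every letter of `w` is distinct from and independent of `a`. -/
def Tr (I : A → A → Prop) (a : A) (w : List A) : Prop := ∀ b ∈ w, b ≠ a ∧ I a b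

lemma tr_iff_of_count {u v : List A} (h : ∀ b, u.count b = v.count b) (a : A) :
    Tr I a u ↔ Tr I a v := by
  have hm : ∀ b, b ∈ u ↔ b ∈ v := by
    intro b
    rw [← List.count_pos_iff, ← List.count_pos_iff, h]
  constructor
  · intro ht b hb; exact ht b ((hm b).mpr hb)
  · intro ht b hb; exact ht b ((hm b).mp hb)

lemma F_concat (a : A) (u v : List A) :
    F I a (u ++ v) = match F I a u with
      | some r => some (r ++ v)
      | none => if Tr I a u then (F I a v).map (u ++ ·) else none := by
  induction u with
  | nil =>
    simp [F, Tr]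
  | cons c u ih =>
    by_cases hca : c = a
    · simp [F, hca]
    · by_cases hic : I a c
      · rw [List.cons_append, show F I a (c :: (u ++ v)) = (F I a (u ++ v)).map (c :: ·) by
          simp [F, hca, hic], show F I a (c :: u) = (F I a u).map (c :: ·) by simp [F, hca, hic],
          ih]
        rcases hFu : F I a u with _ | r
        · simp only
          have htr : Tr I a (c :: u) ↔ Tr I a u := by
            constructor
            · intro h b hb; exact h b (List.mem_cons_of_mem _ hb)
            · intro h b hb
              rcases List.mem_cons.mp hb with rfl | hb
              · exact ⟨hca, hic⟩
              · exact h b hb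
          by_cases ht : Tr I a u
          · simp only [Option.map_none, ht, if_true, htr.mpr ht, Option.map_map]
            rfl
          · simp only [Option.map_none, ht, if_false, htr]
        · simp
      · have h1 : F I a (c :: (u ++ v)) = none := by simp [F, hca, hic]
        have h2 : F I a (c :: u) = none := by simp [F, hca, hic]
        have h3 : ¬ Tr I a (c :: u) := fun h => hic (h c List.mem_cons_self).2
        simp [List.cons_append, h1, h2, h3]

/-- relation on optional remainders -/
def optR (I : A → A → Prop) (o p : Option (List A)) : Prop :=
  (o = none ∧ p = none) ∨ ∃ u v, o = some u ∧ p = some v ∧ R I u v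

lemma optR_refl (o : Option (List A)) : optR I o o := by
  cases o with
  | none => exact Or.inl ⟨rfl, rfl⟩
  | some u => exact Or.inr ⟨u, u, rfl, rfl, (traceCon I).refl _⟩

lemma optR_symm {o p : Option (List A)} (h : optR I o p) : optR I p o := by
  rcases h with ⟨h1, h2⟩ | ⟨u, v, h1, h2, h3⟩
  · exact Or.inl ⟨h2, h1⟩
  · exact Or.inr ⟨v, u, h2, h1, (traceCon I).symm h3⟩

lemma optR_trans {o p q : Option (List A)} (h1 : optR I o p) (h2 : optR I p q) : optR I o q := by
  rcases h1 with ⟨h1, h1'⟩ | ⟨u, v, h1, h1', h3⟩ <;>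
    rcases h2 with ⟨h2, h2'⟩ | ⟨u', v', h2, h2', h3'⟩
  · exact Or.inl ⟨h1, h2'⟩
  · rw [h1'] at h2; cases h2
  · rw [h1'] at h2; cases h2
  · rw [h1'] at h2
    cases h2
    exact Or.inr ⟨u, v', h1, h2', (traceCon I).trans h3 h3'⟩

lemma ofList_append (u v : List A) :
    FreeMonoid.ofList (u ++ v) = FreeMonoid.ofList u * FreeMonoid.ofList v := rfl

lemma R_append {u u' v v' : List A} (h1 : R I u u') (h2 : R I v v') : R I (u ++ v) (u' ++ v') := by
  unfold R
  rw [ofList_append, ofList_append]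
  exact (traceCon I).mul h1 h2

lemma R_toList {x y : FreeMonoid A} (h : traceCon I x y) : R I x.toList y.toList := by
  unfold R
  rw [FreeMonoid.ofList_toList, FreeMonoid.ofList_toList]
  exact h

/-- main invariance: `F I a` respects the trace congruence -/
lemma F_rel (hsym : Symmetric I) {x y : FreeMonoid A} (h : traceCon I x y) :
    ∀ a, optR I (F I a x.toList) (F I a y.toList) := by
  have h' : ConGen.Rel (swapRel I) x y := h
  clear h
  induction h' with
  | of u v huv =>
    intro a
    obtain ⟨c, d, hcd, rfl, rfl⟩ := huv
    have htl : ∀ e f : A, (FreeMonoid.of e * FreeMonoid.of f).toList = [e, f] := by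
      intro e f; rfl
    rw [htl, htl]
    by_cases hc : c = a
    · subst hc
      by_cases hd : d = c
      · subst hd; exact optR_refl _
      · have h1 : F I c [c, d] = some [d] := by simp [F]
        have h2 : F I c [d, c] = some [d] := by simp [F, hd, hcd]
        rw [h1, h2]
        exact Or.inr ⟨_, _, rfl, rfl, (traceCon I).refl _⟩
    · by_cases hd : d = a
      · subst hd
        have h1 : F I d [c, d] = some [c] := by simp [F, hc, hsym hcd]
        have h2 : F I d [d, c] = some [c] := by simp [F]
        rw [h1, h2]
        exact Or.inr ⟨_, _, rfl, rfl, (traceCon I).refl _⟩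
      · have h1 : F I a [c, d] = none := by
          by_cases hic : I a c <;> simp [F, hc, hd, hic]
        have h2 : F I a [d, c] = none := by
          by_cases hid : I a d <;> simp [F, hc, hd, hid]
        rw [h1, h2]
        exact Or.inl ⟨rfl, rfl⟩
  | refl => exact fun a => optR_refl _
  | symm _ ih => exact fun a => optR_symm (ih a)
  | trans _ _ ih1 ih2 => exact fun a => optR_trans (ih1 a) (ih2 a)
  | mul h1 h2 ih1 ih2 =>
    rename_i p p' q q'
    intro a
    have hp : traceCon I p p' := h1
    have hq : traceCon I q q' := h2
    have htr := tr_iff_of_count (I := I) (fun b => count_eq_of_rel hp b) a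
    have i1 := ih1 a
    have i2 := ih2 a
    rw [FreeMonoid.toList_mul, FreeMonoid.toList_mul, F_concat, F_concat]
    rcases hx1 : F I a p.toList with _ | r <;> rcases hx2 : F I a p'.toList with _ | r' <;>
      rw [hx1, hx2] at i1 <;> dsimp only
    · by_cases ht : Tr I a p.toList
      · rw [if_pos ht, if_pos (htr.mp ht)]
        rcases hy1 : F I a q.toList with _ | s <;> rcases hy2 : F I a q'.toList with _ | s' <;>
          rw [hy1, hy2] at i2 <;> dsimp only [Option.map_none, Option.map_some]
        · exact Or.inl ⟨rfl, rfl⟩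
        · rcases i2 with ⟨e1, e2⟩ | ⟨u', v', e1, e2, e3⟩ <;> simp_all [optR]
        · rcases i2 with ⟨e1, e2⟩ | ⟨u', v', e1, e2, e3⟩ <;> simp_all [optR]
        · have hs : R I s s' := by
            rcases i2 with ⟨e1, e2⟩ | ⟨u', v', e1, e2, e3⟩
            · cases e1
            · cases e1; cases e2; exact e3
          exact Or.inr ⟨_, _, rfl, rfl, R_append (R_toList hp) hs⟩
      · rw [if_neg ht, if_neg fun h => ht (htr.mpr h)]
        exact Or.inl ⟨rfl, rfl⟩
    · rcases i1 with ⟨e1, e2⟩ | ⟨u', v', e1, e2, e3⟩ <;> simp_all [optR]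
    · rcases i1 with ⟨e1, e2⟩ | ⟨u', v', e1, e2, e3⟩ <;> simp_all [optR]
    · have hr : R I r r' := by
        rcases i1 with ⟨e1, e2⟩ | ⟨u', v', e1, e2, e3⟩
        · cases e1
        · cases e1; cases e2; exact e3
      exact Or.inr ⟨_, _, rfl, rfl, R_append hr (R_toList hq)⟩

lemma F_rel_list (hsym : Symmetric I) {u v : List A} (h : R I u v) (a : A) :
    optR I (F I a u) (F I a v) := by
  have := F_rel hsym h a
  rwa [FreeMonoid.toList_ofList, FreeMonoid.toList_ofList] at this

lemma trOf_comm {a c : A} (h : I a c) : trOf I a * trOf I c = trOf I c * trOf I a := by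
  show (traceCon I).mk' _ * (traceCon I).mk' _ = (traceCon I).mk' _ * (traceCon I).mk' _
  rw [← map_mul, ← map_mul]
  exact (traceCon I).eq.mpr (ConGen.Rel.of _ _ ⟨a, c, h, rfl, rfl⟩)

lemma F_cons_eq (a : A) (w : List A) : F I a (a :: w) = some w := by simp [F]

lemma F_cons_ne {a c : A} (hca : c ≠ a) {w u : List A} (h : F I a (c :: w) = some u) :
    I a c ∧ ∃ u', F I a w = some u' ∧ u = c :: u' := by
  by_cases hic : I a c
  · rw [show F I a (c :: w) = (F I a w).map (c :: ·) by simp [F, hca, hic]] at h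
    rcases hFw : F I a w with _ | u' <;> rw [hFw] at h
    · cases h
    · refine ⟨hic, u', rfl, ?_⟩
      injection h with h
      exact h.symm
  · simp [F, hca, hic] at h

lemma mk_eq_of_F (hsym : Symmetric I) {a : A} {w : List A} :
    ∀ {u : List A}, F I a w = some u → mk I w = trOf I a * mk I u := by
  induction w with
  | nil => intro u h; simp [F] at h
  | cons c w ih =>
    intro u h
    by_cases hca : c = a
    · subst hca
      rw [F_cons_eq] at h
      injection h with h
      rw [h, mk_cons]
    · obtain ⟨hic, u', hFw, rfl⟩ := F_cons_ne hca h
      rw [mk_cons, ih hFw, mk_cons, ← mul_assoc, ← trOf_comm hic, mul_assoc]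

lemma dvd_iff_F (hsym : Symmetric I) {a : A} {w : List A} :
    trOf I a ∣ mk I w ↔ ∃ u, F I a w = some u := by
  constructor
  · rintro ⟨z, hz⟩
    obtain ⟨v, rfl⟩ := mk_surjective z
    rw [← mk_cons] at hz
    have := F_rel_list hsym (r_of_mk_eq hz) a
    rw [F_cons_eq] at this
    rcases this with ⟨_, e2⟩ | ⟨u, u', e1, _, _⟩
    · cases e2
    · exact ⟨u, e1⟩
  · rintro ⟨u, hu⟩
    exact ⟨mk I u, mk_eq_of_F hsym hu⟩

lemma cancel_letter (hsym : Symmetric I) {a : A} {x y : TraceMonoid A I}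
    (h : trOf I a * x = trOf I a * y) : x = y := by
  obtain ⟨u, rfl⟩ := mk_surjective x
  obtain ⟨v, rfl⟩ := mk_surjective y
  rw [← mk_cons, ← mk_cons] at h
  have := F_rel_list hsym (r_of_mk_eq h) a
  rw [F_cons_eq, F_cons_eq] at this
  rcases this with ⟨e1, _⟩ | ⟨u', v', e1, e2, e3⟩
  · cases e1
  · cases e1; cases e2; exact mk_eq_mk e3

lemma F_through {a b : A} (hab : a ≠ b) {w : List A} :
    ∀ {u v : List A}, F I a w = some u → F I b w = some v → ∃ v', F I a v = some v' := by
  induction w with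
  | nil => intro u v h _; simp [F] at h
  | cons c w ih =>
    intro u v ha hb
    by_cases hcb : c = b
    · subst hcb
      rw [F_cons_eq] at hb
      injection hb with hb
      obtain ⟨_, u', hFw, _⟩ := F_cons_ne (Ne.symm hab) ha
      exact ⟨u', by rw [← hb]; exact hFw⟩
    · by_cases hca : c = a
      · subst hca
        obtain ⟨_, v', hFv, rfl⟩ := F_cons_ne hcb hb
        exact ⟨v', F_cons_eq c v'⟩
      · obtain ⟨hiac, u', hFu, rfl⟩ := F_cons_ne hca ha
        obtain ⟨hibc, v', hFv, rfl⟩ := F_cons_ne hcb hb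
        obtain ⟨v'', hv''⟩ := ih hFu hFv
        exact ⟨c :: v'', by simp [F, hca, hiac, hv'']⟩

lemma indep_of_F (hsym : Symmetric I) {a b : A} (hab : a ≠ b) {w : List A} :
    ∀ {u v : List A}, F I a w = some u → F I b w = some v → I a b := by
  induction w with
  | nil => intro u v h _; simp [F] at h
  | cons c w ih =>
    intro u v ha hb
    by_cases hca : c = a
    · subst hca
      obtain ⟨hibc, _⟩ := F_cons_ne hab hb
      exact hsym hibc
    · by_cases hcb : c = b
      · subst hcb
        obtain ⟨hiac, _⟩ := F_cons_ne hca ha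
        exact hiac
      · obtain ⟨_, u', hFu, _⟩ := F_cons_ne hca ha
        obtain ⟨_, v', hFv, _⟩ := F_cons_ne hcb hb
        exact ih hFu hFv

lemma indep_of_dvd (hsym : Symmetric I) {a b : A} (hab : a ≠ b) {ω : TraceMonoid A I}
    (ha : trOf I a ∣ ω) (hb : trOf I b ∣ ω) : I a b := by
  obtain ⟨w, rfl⟩ := mk_surjective ω
  obtain ⟨u, hu⟩ := (dvd_iff_F hsym).mp ha
  obtain ⟨v, hv⟩ := (dvd_iff_F hsym).mp hb
  exact indep_of_F hsym hab hu hv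

lemma dvd_of_dvd_mul (hsym : Symmetric I) {a b : A} (hab : a ≠ b) {ω ω' : TraceMonoid A I}
    (ha : trOf I a ∣ ω) (h : ω = trOf I b * ω') : trOf I a ∣ ω' := by
  obtain ⟨w, rfl⟩ := mk_surjective ω
  obtain ⟨u, hu⟩ := (dvd_iff_F hsym).mp ha
  obtain ⟨v, hv⟩ := (dvd_iff_F hsym).mp ⟨ω', h⟩
  obtain ⟨v', hv'⟩ := F_through hab hu hv
  have : mk I w = trOf I b * mk I v := mk_eq_of_F hsym hv
  have hω' : ω' = mk I v := cancel_letter hsym (this.symm.trans h).symm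
  rw [hω']
  exact (dvd_iff_F hsym).mpr ⟨v', hv'⟩

lemma indep_prefix (hsym : Symmetric I) {c : A} : ∀ {p : List A} {ω : TraceMonoid A I},
    trOf I c ∣ ω → mk I p ∣ ω → c ∉ p → ∀ b ∈ p, I c b := by
  intro p
  induction p with
  | nil => intro ω _ _ _ b hb; cases hb
  | cons d p ih =>
    intro ω hc hp hcp b hb
    have hcd : c ≠ d := fun h => hcp (h ▸ List.mem_cons_self)
    obtain ⟨t, ht⟩ := hp
    rw [mk_cons, mul_assoc] at ht
    have hd : trOf I d ∣ ω := ⟨mk I p * t, ht⟩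
    have hicd : I c d := indep_of_dvd hsym hcd hc hd
    rcases List.mem_cons.mp hb with rfl | hb
    · exact hicd
    · have hc' : trOf I c ∣ mk I p * t := dvd_of_dvd_mul hsym hcd hc ht
      exact ih hc' ⟨t, rfl⟩ (fun h => hcp (List.mem_cons_of_mem _ h)) b hb

lemma mk_comm (hsym : Symmetric I) {c : A} {p : List A} (h : ∀ b ∈ p, I c b) (q : List A) :
    mk I (p ++ c :: q) = trOf I c * mk I (p ++ q) := by
  induction p with
  | nil => simp only [List.nil_append]; exact mk_cons c q
  | cons d p ih =>
    have hcd := h d (List.mem_cons_self)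
    rw [List.cons_append, mk_cons, ih (fun b hb => h b (List.mem_cons_of_mem _ hb)),
      List.cons_append, mk_cons, ← mul_assoc, ← trOf_comm hcd, mul_assoc]

lemma exists_first_split {c : A} {v : List A} (h : c ∈ v) :
    ∃ p q, v = p ++ c :: q ∧ c ∉ p := by
  induction v with
  | nil => cases h
  | cons d v ih =>
    by_cases hdc : d = c
    · exact ⟨[], v, by simp [hdc], List.not_mem_nil⟩
    · obtain ⟨p, q, rfl, hcp⟩ := ih (by
        rcases List.mem_cons.mp h with h | h
        · exact absurd h.symm hdc
        · exact h)
      exact ⟨d :: p, q, rfl, by simp [List.mem_cons, hcp, Ne.symm hdc]⟩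

lemma main (hsym : Symmetric I) : ∀ (u v : List A) (ω : TraceMonoid A I),
    mk I u ∣ ω → mk I v ∣ ω → (∀ b, u.count b = v.count b) → mk I u = mk I v := by
  intro u
  induction u with
  | nil =>
    intro v ω _ _ hcnt
    have hv : v = [] := by
      cases v with
      | nil => rfl
      | cons b v =>
        exfalso
        have := hcnt b
        simp [List.count_cons] at this
    rw [hv]
  | cons c u ih =>
    intro v ω hu hv hcnt
    have hcu : trOf I c ∣ ω := by
      obtain ⟨t, ht⟩ := hu
      rw [mk_cons, mul_assoc] at ht
      exact ⟨_, ht⟩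
    have hcv : c ∈ v := by
      have h1 := hcnt c
      rw [← List.count_pos_iff]
      simp [List.count_cons] at h1
      omega
    obtain ⟨p, q, rfl, hcp⟩ := exists_first_split hcv
    have hpdvd : mk I p ∣ ω := by
      obtain ⟨t, ht⟩ := hv
      rw [mk_append, mul_assoc] at ht
      exact ⟨_, ht⟩
    have hind : ∀ b ∈ p, I c b := indep_prefix hsym hcu hpdvd hcp
    have hveq : mk I (p ++ c :: q) = trOf I c * mk I (p ++ q) := mk_comm hsym hind q
    obtain ⟨ω', hω⟩ := hcu
    have hu' : mk I u ∣ ω' := by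
      obtain ⟨s, hs⟩ := hu
      rw [mk_cons, mul_assoc] at hs
      exact ⟨s, cancel_letter hsym (hω.symm.trans hs)⟩
    have hv' : mk I (p ++ q) ∣ ω' := by
      obtain ⟨t, ht⟩ := hv
      rw [hveq, mul_assoc] at ht
      exact ⟨t, cancel_letter hsym (hω.symm.trans ht)⟩
    have hcnt' : ∀ b, u.count b = (p ++ q).count b := by
      intro b
      have h1 := hcnt b
      simp only [List.count_cons, List.count_append] at h1 ⊢
      omega
    rw [mk_cons, ih (p ++ q) ω' hu' hv' hcnt', hveq]

end Stmt0Aux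

/-- for `I ⊆ I'`, the canonical surjection `π : M(Σ,I) → M(Σ,I')` is
injective on the set of left divisors of any `ω ∈ M(Σ,I)`. -/
theorem stmt0 {A : Type*} [Fintype A] {I I' : A → A → Prop}
    (hIsym : Symmetric I) (hIirr : Irreflexive I)
    (hI'sym : Symmetric I') (hI'irr : Irreflexive I')
    (hsub : ∀ a b, I a b → I' a b)
    (hsurj : Function.Surjective (traceMap hsub))
    (ω : TraceMonoid A I) :
    Set.InjOn (traceMap hsub) {x : TraceMonoid A I | x ∣ ω} := by
  intro x hx y hy heq
  obtain ⟨u, rfl⟩ := Stmt0Aux.mk_surjective x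
  obtain ⟨v, rfl⟩ := Stmt0Aux.mk_surjective y
  have hmap : ∀ w : List A, traceMap hsub (Stmt0Aux.mk I w) = Stmt0Aux.mk I' w := fun w =>
    Con.lift_mk' _ _
  rw [hmap, hmap] at heq
  have hR : Stmt0Aux.R I' u v := Stmt0Aux.r_of_mk_eq heq
  have hcnt : ∀ b, u.count b = v.count b := by
    intro b
    have := Stmt0Aux.count_eq_of_rel hR b
    rwa [FreeMonoid.toList_ofList, FreeMonoid.toList_ofList] at this
  exact Stmt0Aux.main hIsym u v ω hx hy hcnt
end

section
/- Let M = M(Σ,I) be a trace monoid on a finite alphabet Σ with |Σ| = N ≥ 1, and let ω ∈ M. Then the number of left divisors of ω of length n is at most the number of multisets of size n over Σ, i.e., #{x ∈ M | x ≤ ω ∧ |x| = n} ≤ C(n+N−1, N−1). In particular this bound is polynomial in n and does not depend on ω. -/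
open scoped Classical

section Aux

variable {A : Type*} {I : A → A → Prop}

/-- The trace of a list of letters. -/
noncomputable def tmk (I : A → A → Prop) (l : List A) : TraceMonoid A I :=
  (traceCon I).mk' (FreeMonoid.ofList l)

theorem tmk_append (u v : List A) : tmk I (u ++ v) = tmk I u * tmk I v := by
  simp [tmk, FreeMonoid.ofList_append, map_mul]

theorem tmk_eq_iff {u v : List A} :
    tmk I u = tmk I v ↔ ConGen.Rel (swapRel I) (FreeMonoid.ofList u) (FreeMonoid.ofList v) := by
  constructor
  · intro h
    exact (Con.eq _).mp h
  · intro h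
    exact (Con.eq _).mpr h

theorem rel_tmk {x y : FreeMonoid A} (h : ConGen.Rel (swapRel I) x y) :
    tmk I (FreeMonoid.toList x) = tmk I (FreeMonoid.toList y) :=
  tmk_eq_iff.mpr h

theorem tmk_surjective (x : TraceMonoid A I) : ∃ l : List A, x = tmk I l := by
  obtain ⟨w, rfl⟩ := Con.mk'_surjective x
  exact ⟨FreeMonoid.toList w, rfl⟩

theorem trOf_eq_tmk (a : A) : trOf I a = tmk I [a] := rfl

theorem tmk_cons (a : A) (l : List A) : tmk I (a :: l) = trOf I a * tmk I l := by
  rw [trOf_eq_tmk, ← tmk_append]; rfl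

theorem trCount_mul (a : A) (x y : TraceMonoid A I) :
    trCount a (x * y) = trCount a x + trCount a y := by
  simp [trCount, map_mul]

theorem trLen_mul (x y : TraceMonoid A I) : trLen (x * y) = trLen x + trLen y := by
  simp [trLen, map_mul]

theorem trCount_trOf (a b : A) :
    trCount a (trOf I b) = if b = a then 1 else 0 := by
  simp [trCount, trOf, Con.lift_mk']

theorem trLen_trOf (b : A) : trLen (trOf I b : TraceMonoid A I) = 1 := by
  simp [trLen, trOf, Con.lift_mk']

theorem trCount_one (a : A) : trCount a (1 : TraceMonoid A I) = 0 := by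
  simp [trCount]

theorem trLen_one : trLen (1 : TraceMonoid A I) = 0 := by
  simp [trLen]

theorem tmk_nil : tmk I ([] : List A) = 1 := rfl

theorem trCount_tmk [DecidableEq A] (a : A) (l : List A) :
    trCount a (tmk I l) = l.count a := by
  induction l with
  | nil => simpa [tmk_nil] using trCount_one a
  | cons b l ih =>
    rw [tmk_cons, trCount_mul, trCount_trOf, ih, List.count_cons]
    by_cases hb : b = a <;> simp [hb] <;> omega

theorem trLen_tmk (l : List A) : trLen (tmk I l) = l.length := by
  induction l with
  | nil => simpa [tmk_nil] using trLen_one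
  | cons b l ih => rw [tmk_cons, trLen_mul, trLen_trOf, ih, List.length_cons]; omega

theorem count_eq_of_tmk_eq [DecidableEq A] {u v : List A} (h : tmk I u = tmk I v) (a : A) :
    u.count a = v.count a := by
  rw [← trCount_tmk a u, ← trCount_tmk a v, h]

theorem mem_iff_of_tmk_eq [DecidableEq A] {u v : List A} (h : tmk I u = tmk I v) (a : A) :
    a ∈ u ↔ a ∈ v := by
  rw [← List.count_pos_iff, ← List.count_pos_iff, count_eq_of_tmk_eq h a]

theorem tmk_swap (a b : A) (h : I a b) : tmk I [a, b] = tmk I [b, a] := by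
  refine tmk_eq_iff.mpr (ConGen.Rel.of _ _ ?_)
  exact ⟨a, b, h, rfl, rfl⟩

/-- Erasing the first occurrence of a letter is compatible with the congruence. -/
theorem tmk_erase [DecidableEq A] {x y : FreeMonoid A}
    (h : ConGen.Rel (swapRel I) x y) (a : A) :
    tmk I ((FreeMonoid.toList x).erase a) = tmk I ((FreeMonoid.toList y).erase a) := by
  induction h with
  | of x y hxy =>
    obtain ⟨b, c, hbc, rfl, rfl⟩ := hxy
    show tmk I (([b, c] : List A).erase a) = tmk I (([c, b] : List A).erase a)
    by_cases hbc' : b = c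
    · subst hbc'; rfl
    · by_cases hab : a = b
      · subst hab
        rw [List.erase_cons_head, List.erase_cons_tail (by simp [Ne.symm hbc']),
          List.erase_cons_head]
      · by_cases hac : a = c
        · subst hac
          rw [List.erase_cons_tail (by simp [Ne.symm hab]), List.erase_cons_head,
            List.erase_cons_head]
        · have h1 : a ∉ [b, c] := by
            simp only [List.mem_cons, List.not_mem_nil, or_false]
            exact not_or.mpr ⟨hab, hac⟩
          have h2 : a ∉ [c, b] := by
            simp only [List.mem_cons, List.not_mem_nil, or_false]
            exact not_or.mpr ⟨hac, hab⟩
          rw [List.erase_of_not_mem h1, List.erase_of_not_mem h2]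
          exact tmk_swap b c hbc
  | refl x => rfl
  | symm _ ih => exact ih.symm
  | trans _ _ ih1 ih2 => exact ih1.trans ih2
  | mul hwx hyz ih1 ih2 =>
    rename_i w x y z
    show tmk I ((FreeMonoid.toList w ++ FreeMonoid.toList y).erase a)
      = tmk I ((FreeMonoid.toList x ++ FreeMonoid.toList z).erase a)
    by_cases hmem : a ∈ FreeMonoid.toList w
    · have hmem' : a ∈ FreeMonoid.toList x := (mem_iff_of_tmk_eq (rel_tmk hwx) a).mp hmem
      rw [List.erase_append_left _ hmem, List.erase_append_left _ hmem',
        tmk_append, tmk_append, ih1, rel_tmk hyz]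
    · have hmem' : a ∉ FreeMonoid.toList x := fun hc =>
        hmem ((mem_iff_of_tmk_eq (rel_tmk hwx) a).mpr hc)
      rw [List.erase_append_right _ hmem, List.erase_append_right _ hmem',
        tmk_append, tmk_append, ih2, rel_tmk hwx]

theorem tmk_cancel [DecidableEq A] {a : A} {u v : List A}
    (h : tmk I (a :: u) = tmk I (a :: v)) : tmk I u = tmk I v := by
  have := tmk_erase (tmk_eq_iff.mp h) a
  simpa using this

/-- The letter `a` can be brought to the front of the word `l`. -/
def FirstOK (I : A → A → Prop) (a : A) (l : List A) : Prop :=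
  ∃ u v, l = u ++ a :: v ∧ ∀ b ∈ u, I a b

theorem firstOK_nil {a : A} : ¬ FirstOK I a [] := by
  rintro ⟨u, v, h, -⟩
  have := congrArg List.length h
  simp at this

theorem firstOK_cons {a b : A} {l : List A} :
    FirstOK I a (b :: l) ↔ b = a ∨ (I a b ∧ FirstOK I a l) := by
  constructor
  · rintro ⟨u, v, h, hu⟩
    cases u with
    | nil =>
      simp only [List.nil_append, List.cons.injEq] at h
      exact Or.inl h.1
    | cons c u' =>
      simp only [List.cons_append, List.cons.injEq] at h
      obtain ⟨rfl, hl⟩ := h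
      exact Or.inr ⟨hu b (by simp), ⟨u', v, hl, fun x hx => hu x (by simp [hx])⟩⟩
  · rintro (rfl | ⟨hI, u, v, rfl, hu⟩)
    · exact ⟨[], l, rfl, by simp⟩
    · exact ⟨b :: u, v, rfl, by
        intro x hx
        rcases List.mem_cons.mp hx with rfl | hx
        · exact hI
        · exact hu x hx⟩

theorem firstOK_append {a : A} {u v : List A} :
    FirstOK I a (u ++ v) ↔ FirstOK I a u ∨ ((∀ b ∈ u, I a b) ∧ FirstOK I a v) := by
  induction u with
  | nil => simp [firstOK_nil]
  | cons b u' ih =>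
    simp only [List.cons_append, firstOK_cons, ih, List.mem_cons]
    constructor
    · rintro (rfl | ⟨hI, h⟩)
      · exact Or.inl (Or.inl rfl)
      · rcases h with h | ⟨hall, hv⟩
        · exact Or.inl (Or.inr ⟨hI, h⟩)
        · exact Or.inr ⟨fun x hx => by rcases hx with rfl | hx; exact hI; exact hall x hx, hv⟩
    · rintro ((rfl | ⟨hI, h⟩) | ⟨hall, hv⟩)
      · exact Or.inl rfl
      · exact Or.inr ⟨hI, Or.inl h⟩
      · exact Or.inr ⟨hall b (Or.inl rfl), Or.inr ⟨fun x hx => hall x (Or.inr hx), hv⟩⟩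

/-- `FirstOK` is invariant under the trace congruence. -/
theorem firstOK_rel [DecidableEq A] (hsym : Symmetric I) {x y : FreeMonoid A}
    (h : ConGen.Rel (swapRel I) x y) (a : A) :
    FirstOK I a (FreeMonoid.toList x) ↔ FirstOK I a (FreeMonoid.toList y) := by
  induction h with
  | of x y hxy =>
    obtain ⟨b, c, hbc, rfl, rfl⟩ := hxy
    show FirstOK I a [b, c] ↔ FirstOK I a [c, b]
    simp only [firstOK_cons, firstOK_nil, and_false, or_false]
    constructor
    · rintro (hba | ⟨hI, hca⟩)
      · exact Or.inr ⟨hba ▸ hbc, hba⟩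
      · exact Or.inl hca
    · rintro (hca | ⟨hI, hba⟩)
      · exact Or.inr ⟨hca ▸ hsym hbc, hca⟩
      · exact Or.inl hba
  | refl x => rfl
  | symm _ ih => exact ih.symm
  | trans _ _ ih1 ih2 => exact ih1.trans ih2
  | mul hwx hyz ih1 ih2 =>
    rename_i w x y z
    show FirstOK I a (FreeMonoid.toList w ++ FreeMonoid.toList y)
      ↔ FirstOK I a (FreeMonoid.toList x ++ FreeMonoid.toList z)
    rw [firstOK_append, firstOK_append, ih1, ih2]
    have hmem : ∀ b, b ∈ FreeMonoid.toList w ↔ b ∈ FreeMonoid.toList x := fun b =>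
      mem_iff_of_tmk_eq (rel_tmk hwx) b
    constructor
    · rintro (h | ⟨hall, hv⟩)
      · exact Or.inl h
      · exact Or.inr ⟨fun b hb => hall b ((hmem b).mpr hb), hv⟩
    · rintro (h | ⟨hall, hv⟩)
      · exact Or.inl h
      · exact Or.inr ⟨fun b hb => hall b ((hmem b).mp hb), hv⟩

theorem firstOK_tmk {a : A} {l : List A} (h : FirstOK I a l) :
    ∃ l', tmk I l = tmk I (a :: l') := by
  obtain ⟨u, v, rfl, hu⟩ := h
  induction u with
  | nil => exact ⟨v, rfl⟩
  | cons b u' ih =>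
    obtain ⟨w, hw⟩ := ih fun x hx => hu x (by simp [hx])
    refine ⟨b :: w, ?_⟩
    have hIab : I a b := hu b (by simp)
    calc tmk I ((b :: u') ++ a :: v) = tmk I [b] * tmk I (u' ++ a :: v) := by
          rw [← tmk_append]; rfl
      _ = tmk I [b] * tmk I (a :: w) := by rw [hw]
      _ = tmk I ([b, a] ++ w) := by rw [tmk_append]; rfl
      _ = tmk I ([a, b] ++ w) := by rw [tmk_append, tmk_append, tmk_swap a b hIab]
      _ = tmk I (a :: b :: w) := rfl

theorem dvd_tmk_iff_firstOK [DecidableEq A] (hsym : Symmetric I) {a : A} {l : List A} :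
    trOf I a ∣ tmk I l ↔ FirstOK I a l := by
  constructor
  · rintro ⟨z, hz⟩
    obtain ⟨m, rfl⟩ := tmk_surjective z
    rw [trOf_eq_tmk, ← tmk_append] at hz
    have := (firstOK_rel hsym (tmk_eq_iff.mp hz) a).mpr
    exact this ⟨[], m, rfl, by simp⟩
  · intro h
    obtain ⟨l', hl'⟩ := firstOK_tmk h
    exact ⟨tmk I l', by rw [hl', tmk_cons]⟩

/-- Key injectivity: two left divisors of a common trace with the same letter counts
are equal. -/
theorem tmk_inj_of_counts [DecidableEq A] (hsym : Symmetric I) (hirr : Irreflexive I) :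
    ∀ (u v s t : List A), tmk I (u ++ s) = tmk I (v ++ t) →
      (∀ a, u.count a = v.count a) → tmk I u = tmk I v := by
  intro u
  induction u with
  | nil =>
    intro v s t _ hc
    have hv : v = [] := by
      cases v with
      | nil => rfl
      | cons b v' =>
        exfalso
        have := hc b
        rw [List.count_nil, List.count_cons_self] at this
        omega
    rw [hv]
  | cons a u' ih =>
    intro v s t hω hc
    have ha_v : a ∈ v := by
      have : 0 < v.count a := by
        have := hc a; rw [List.count_cons_self] at this; omega
      exact List.count_pos_iff.mp this
    -- `a` can be brought to the front of `v`
    have hfok : FirstOK I a (v ++ t) := by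
      have h1 : FirstOK I a ((a :: u') ++ s) := ⟨[], u' ++ s, rfl, by simp⟩
      exact (firstOK_rel hsym (tmk_eq_iff.mp hω) a).mp h1
    have hfv : FirstOK I a v := by
      rcases firstOK_append.mp hfok with h | ⟨hall, _⟩
      · exact h
      · exact absurd (hall a ha_v) (hirr a)
    obtain ⟨v', hv'⟩ := firstOK_tmk hfv
    -- cancel `a`
    have hω' : tmk I (u' ++ s) = tmk I (v' ++ t) := by
      apply tmk_cancel (a := a)
      calc tmk I (a :: (u' ++ s)) = tmk I ((a :: u') ++ s) := rfl
        _ = tmk I (v ++ t) := hω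
        _ = tmk I v * tmk I t := tmk_append v t
        _ = tmk I (a :: v') * tmk I t := by rw [hv']
        _ = tmk I ((a :: v') ++ t) := (tmk_append _ t).symm
        _ = tmk I (a :: (v' ++ t)) := rfl
    have hc' : ∀ b, u'.count b = v'.count b := by
      intro b
      have h1 : (a :: u').count b = v.count b := hc b
      have h2 : v.count b = (a :: v').count b := count_eq_of_tmk_eq hv' b
      rw [h2] at h1
      simp only [List.count_cons] at h1
      omega
    have := ih v' s t hω' hc'
    rw [hv', tmk_cons, tmk_cons, this]

/-- Injectivity of the Parikh map on left divisors of a fixed trace. -/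
theorem trCount_inj (hsym : Symmetric I) (hirr : Irreflexive I) {ω x y : TraceMonoid A I}
    (hx : x ∣ ω) (hy : y ∣ ω) (h : ∀ a, trCount a x = trCount a y) : x = y := by
  classical
  obtain ⟨u, rfl⟩ := tmk_surjective x
  obtain ⟨v, rfl⟩ := tmk_surjective y
  obtain ⟨zx, hzx⟩ := hx
  obtain ⟨zy, hzy⟩ := hy
  obtain ⟨s, rfl⟩ := tmk_surjective zx
  obtain ⟨t, rfl⟩ := tmk_surjective zy
  refine tmk_inj_of_counts hsym hirr u v s t ?_ ?_
  · rw [tmk_append, tmk_append, ← hzx, ← hzy]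
  · intro a
    rw [← trCount_tmk a u, ← trCount_tmk a v, h a]

theorem length_eq_sum_count [Fintype A] [DecidableEq A] (l : List A) :
    ∑ a : A, l.count a = l.length := by
  induction l with
  | nil => simp
  | cons b l ih =>
    simp only [List.count_cons, List.length_cons, Finset.sum_add_distrib, ih]
    simp

theorem trLen_eq_sum_trCount [Fintype A] [DecidableEq A] (x : TraceMonoid A I) :
    ∑ a : A, trCount a x = trLen x := by
  obtain ⟨l, rfl⟩ := tmk_surjective x
  simp only [trCount_tmk, trLen_tmk]
  exact length_eq_sum_count l

end Aux

/-- the set of left divisors of `ω` of length `n` is finite of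
cardinality at most `C(n + N - 1, N - 1)`, where `N = |Σ| ≥ 1`. -/
theorem stmt2 {A : Type*} [Fintype A] {I : A → A → Prop}
    (hsym : Symmetric I) (hirr : Irreflexive I)
    (N : ℕ) (hN : N = Fintype.card A) (hN1 : 1 ≤ N)
    (ω : TraceMonoid A I) (n : ℕ) :
    {x : TraceMonoid A I | x ∣ ω ∧ trLen x = n}.Finite ∧
      Nat.card {x : TraceMonoid A I // x ∣ ω ∧ trLen x = n} ≤ (n + N - 1).choose (N - 1) := by
  classical
  -- the Parikh map into multisets of size `n`
  have hcard : ∀ x : {x : TraceMonoid A I // x ∣ ω ∧ trLen x = n},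
      Multiset.card (∑ a : A, (trCount a x.1) • ({a} : Multiset A)) = n := by
    rintro ⟨x, hx, hn⟩
    rw [Multiset.card_sum]
    simp only [Multiset.card_nsmul, Multiset.card_singleton, mul_one]
    rw [trLen_eq_sum_trCount, hn]
  set f : {x : TraceMonoid A I // x ∣ ω ∧ trLen x = n} → Sym A n := fun x =>
    ⟨∑ a : A, (trCount a x.1) • ({a} : Multiset A), hcard x⟩ with hf
  have hcount : ∀ (x : TraceMonoid A I) (b : A),
      Multiset.count b (∑ a : A, (trCount a x) • ({a} : Multiset A)) = trCount b x := by
    intro x b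
    rw [Multiset.count_sum']
    simp [Multiset.count_nsmul, Multiset.count_singleton]
  have hinj : Function.Injective f := by
    rintro ⟨x, hx, hxn⟩ ⟨y, hy, hyn⟩ hxy
    have hmul : (∑ a : A, (trCount a x) • ({a} : Multiset A))
        = ∑ a : A, (trCount a y) • ({a} : Multiset A) := by
      exact congrArg Subtype.val hxy
    have hcnt : ∀ a, trCount a x = trCount a y := by
      intro a
      rw [← hcount x a, ← hcount y a, hmul]
    exact Subtype.ext (trCount_inj hsym hirr hx hy hcnt)
  have hfin : Finite {x : TraceMonoid A I // x ∣ ω ∧ trLen x = n} :=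
    Finite.of_injective f hinj
  constructor
  · exact Set.finite_coe_iff.mp hfin
  · calc Nat.card {x : TraceMonoid A I // x ∣ ω ∧ trLen x = n}
        ≤ Nat.card (Sym A n) := Nat.card_le_card_of_injective f hinj
    _ = (Fintype.card A + n - 1).choose n := by
        rw [Nat.card_eq_fintype_card, Sym.card_sym_eq_choose]
    _ = (n + N - 1).choose (N - 1) := by
        rw [← hN, add_comm N n]
        have h1 : n ≤ n + N - 1 := by omega
        have h2 : n + N - 1 - n = N - 1 := by omega
        rw [← Nat.choose_symm h1, h2]
end

section
/- Let M = M(Σ,I) be a trace monoid on a finite alphabet. A pair of cliques (x,y) is normal, written x → y, if every letter b ∈ y depends on some letter a ∈ x (i.e., (a,b) ∉ I or a = b). Then for every nonempty trace x ∈ M there exists a unique k ≥ 1 and a unique sequence (c₁,…,c_k) of nonempty cliques with c_i → c_{i+1} for all 1 ≤ i < k and x = c₁·…·c_k (the Cartier–Foata normal form). -/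
open scoped Classical

/-- A normal pair of cliques: every letter of `d` depends on some letter of `c`. -/
def NormalPairM {A : Type*} (I : A → A → Prop) (c d : TraceMonoid A I) : Prop :=
  ∃ l₁ l₂ : List A, IsCliqueList I l₁ ∧ IsCliqueList I l₂ ∧
    c = listProd I l₁ ∧ d = listProd I l₂ ∧
    ∀ b ∈ l₂, ∃ a ∈ l₁, (¬ I a b ∨ a = b)
section CF

variable {A : Type*} {I : A → A → Prop}

lemma trOf_comm {a b : A} (h : I a b) : trOf I a * trOf I b = trOf I b * trOf I a := by
  show (traceCon I).mk' _ * (traceCon I).mk' _ = (traceCon I).mk' _ * (traceCon I).mk' _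
  rw [← map_mul, ← map_mul]
  have h2 : (traceCon I) (FreeMonoid.of a * FreeMonoid.of b) (FreeMonoid.of b * FreeMonoid.of a) :=
    ConGen.Rel.of _ _ ⟨a, b, h, rfl, rfl⟩
  simpa [Con.coe_mk'] using ((traceCon I).eq).2 h2

lemma listProd_eq_mk (l : List A) :
    listProd I l = (traceCon I).mk' (FreeMonoid.ofList l) := by
  induction l with
  | nil => simp [listProd]
  | cons a l ih =>
      have h1 : FreeMonoid.ofList (a :: l) = FreeMonoid.of a * FreeMonoid.ofList l := by
        simpa using FreeMonoid.ofList_append [a] l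
      simp only [listProd, List.map_cons, List.prod_cons] at ih ⊢
      rw [ih, h1, map_mul]
      rfl

lemma toAdd_list_prod (l : List (Multiplicative ℕ)) :
    Multiplicative.toAdd l.prod = (l.map Multiplicative.toAdd).sum := by
  induction l with
  | nil => simp
  | cons a l ih => simp [ih]

lemma trCount_listProd (a : A) (l : List A) :
    trCount a (listProd I l) = l.count a := by
  rw [listProd_eq_mk]
  show Multiplicative.toAdd _ = _
  rw [Con.lift_mk', FreeMonoid.lift_apply, FreeMonoid.toList_ofList, toAdd_list_prod,
    List.map_map]
  induction l with
  | nil => simp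
  | cons b l ih =>
      simp only [List.map_cons, List.sum_cons, List.count_cons, ih, Function.comp_apply,
        toAdd_ofAdd]
      by_cases h : b = a <;> simp [h] <;> omega

lemma mem_of_listProd_eq {l l' : List A} (h : listProd I l = listProd I l') (a : A) :
    a ∈ l ↔ a ∈ l' := by
  have hc := congrArg (trCount a) h
  rw [trCount_listProd, trCount_listProd] at hc
  constructor <;> intro hm <;> by_contra hn
  · exact (List.count_eq_zero.1 (hc.trans (List.count_eq_zero.2 hn))) hm
  · exact (List.count_eq_zero.1 (hc.symm.trans (List.count_eq_zero.2 hn))) hm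

lemma listProd_ne_one {l : List A} (h : l ≠ []) : listProd I l ≠ (1 : TraceMonoid A I) := by
  intro h1
  have h2 : listProd I l = listProd I ([] : List A) := by simpa [listProd] using h1
  cases l with
  | nil => exact h rfl
  | cons a l => simpa using (mem_of_listProd_eq h2 a).1 (by simp)

lemma listProd_perm {l l' : List A} (hp : l.Perm l')
    (hc : l.Pairwise fun a b => I a b ∨ I b a) :
    listProd I l = listProd I l' := by
  apply List.Perm.prod_eq' (hp.map (trOf I))
  rw [List.pairwise_map]
  exact hc.imp fun h => h.elim (fun h => trOf_comm h) (fun h => (trOf_comm h).symm)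

lemma trOf_comm_listProd {a : A} {l : List A} (h : ∀ b ∈ l, I a b) :
    trOf I a * listProd I l = listProd I l * trOf I a := by
  induction l with
  | nil => simp [listProd]
  | cons b l ih =>
      simp only [listProd, List.map_cons, List.prod_cons] at ih ⊢
      rw [← mul_assoc, trOf_comm (h b (by simp)), mul_assoc,
        ih (fun c hc => h c (by simp [hc])), ← mul_assoc]

lemma trOf_comm_fprod {a : A} {c : Finset A} (h : ∀ b ∈ c, I a b) :
    trOf I a * fprod I c = fprod I c * trOf I a :=
  trOf_comm_listProd (fun b hb => h b (Finset.mem_toList.1 hb))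

lemma fprod_insert (hirr : Irreflexive I) {a : A} {c : Finset A}
    (hp : (↑c : Set A).Pairwise I) (h : ∀ b ∈ c, I a b) :
    fprod I (insert a c) = fprod I c * trOf I a := by
  have hac : a ∉ c := fun hac => hirr a (h a hac)
  have hperm : (insert a c).toList.Perm (a :: c.toList) := Finset.toList_insert hac
  have hpw : (insert a c).toList.Pairwise fun x y => I x y ∨ I y x := by
    refine List.Pairwise.imp_of_mem ?_ (Finset.nodup_toList _)
    intro x y hx hy hxy
    rw [Finset.mem_toList, Finset.mem_insert] at hx hy
    rcases hx with rfl | hx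
    · rcases hy with rfl | hy
      · exact absurd rfl hxy
      · exact Or.inl (h _ hy)
    · rcases hy with rfl | hy
      · exact Or.inr (h _ hx)
      · exact Or.inl (hp hx hy hxy)
  calc fprod I (insert a c) = listProd I (a :: c.toList) := listProd_perm hperm hpw
    _ = trOf I a * fprod I c := by simp [listProd, fprod]
    _ = fprod I c * trOf I a := trOf_comm_fprod h

end CF
section CF2

variable {A : Type*} {I : A → A → Prop}

/-- `a` is independent of every letter appearing in `L`. -/
def freeP (I : A → A → Prop) (a : A) (L : List (Finset A)) : Prop :=
  ∀ c ∈ L, ∀ b ∈ c, I a b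

lemma freeP_nil (a : A) : freeP I a [] := by simp [freeP]

lemma freeP_cons {a : A} {c : Finset A} {L : List (Finset A)} :
    freeP I a (c :: L) ↔ (∀ b ∈ c, I a b) ∧ freeP I a L := by
  simp [freeP]

/-- Cartier–Foata insertion of a letter into a normal sequence of cliques. -/
noncomputable def insCF (I : A → A → Prop) (a : A) : List (Finset A) → List (Finset A)
  | [] => [{a}]
  | c :: L => if freeP I a (c :: L) then insert a c :: L else c :: insCF I a L

lemma insCF_nil (a : A) : insCF I a [] = [{a}] := rfl

lemma insCF_pos {a : A} {c : Finset A} {L : List (Finset A)} (h : freeP I a (c :: L)) :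
    insCF I a (c :: L) = insert a c :: L := by simp [insCF, h]

lemma insCF_neg {a : A} {c : Finset A} {L : List (Finset A)} (h : ¬ freeP I a (c :: L)) :
    insCF I a (c :: L) = c :: insCF I a L := by simp [insCF, h]

lemma freeP_insCF (x a : A) : ∀ L : List (Finset A),
    freeP I x (insCF I a L) ↔ I x a ∧ freeP I x L
  | [] => by simp [insCF_nil, freeP]
  | c :: L => by
      by_cases h : freeP I a (c :: L)
      · rw [insCF_pos h, freeP_cons, freeP_cons, Finset.forall_mem_insert]
        tauto
      · rw [insCF_neg h, freeP_cons, freeP_cons, freeP_insCF x a L]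
        tauto

lemma insCF_comm (hsym : Symmetric I) {a b : A} (hab : I a b) :
    ∀ L : List (Finset A), insCF I a (insCF I b L) = insCF I b (insCF I a L)
  | [] => by
      have h1 : freeP I a [({b} : Finset A)] := by simp [freeP]; exact hab
      have h2 : freeP I b [({a} : Finset A)] := by simp [freeP]; exact hsym hab
      rw [insCF_nil, insCF_nil, insCF_pos h1, insCF_pos h2]
      simp [Finset.pair_comm]
  | c :: L => by
      have hba : I b a := hsym hab
      by_cases hfa : freeP I a (c :: L) <;> by_cases hfb : freeP I b (c :: L)
      · have e1 : freeP I a (insert b c :: L) := by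
          rw [freeP_cons, Finset.forall_mem_insert]
          exact ⟨⟨hab, (freeP_cons.1 hfa).1⟩, (freeP_cons.1 hfa).2⟩
        have e2 : freeP I b (insert a c :: L) := by
          rw [freeP_cons, Finset.forall_mem_insert]
          exact ⟨⟨hba, (freeP_cons.1 hfb).1⟩, (freeP_cons.1 hfb).2⟩
        rw [insCF_pos hfb, insCF_pos hfa, insCF_pos e1, insCF_pos e2, Finset.insert_comm]
      · -- a free, b not free
        have e1 : freeP I a (c :: insCF I b L) := by
          rw [freeP_cons, freeP_insCF]
          exact ⟨(freeP_cons.1 hfa).1, hab, (freeP_cons.1 hfa).2⟩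
        have e2 : ¬ freeP I b (insert a c :: L) := by
          rw [freeP_cons, Finset.forall_mem_insert]
          rw [freeP_cons] at hfb
          tauto
        rw [insCF_neg hfb, insCF_pos e1, insCF_pos hfa, insCF_neg e2]
      · -- b free, a not free
        have e1 : freeP I b (c :: insCF I a L) := by
          rw [freeP_cons, freeP_insCF]
          exact ⟨(freeP_cons.1 hfb).1, hba, (freeP_cons.1 hfb).2⟩
        have e2 : ¬ freeP I a (insert b c :: L) := by
          rw [freeP_cons, Finset.forall_mem_insert]
          rw [freeP_cons] at hfa
          tauto
        rw [insCF_pos hfb, insCF_neg e2, insCF_neg hfa, insCF_pos e1]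
      · have e1 : ¬ freeP I a (c :: insCF I b L) := by
          rw [freeP_cons, freeP_insCF]
          rw [freeP_cons] at hfa
          tauto
        have e2 : ¬ freeP I b (c :: insCF I a L) := by
          rw [freeP_cons, freeP_insCF]
          rw [freeP_cons] at hfb
          tauto
        rw [insCF_neg hfb, insCF_neg hfa, insCF_neg e1, insCF_neg e2,
          insCF_comm hsym hab L]

/-- Folding Cartier–Foata insertion over a word. -/
noncomputable def foldCF (I : A → A → Prop) (L0 : List (Finset A)) (l : List A) :
    List (Finset A) :=
  l.foldl (fun L a => insCF I a L) L0

lemma foldCF_append (L0 : List (Finset A)) (l l' : List A) :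
    foldCF I L0 (l ++ l') = foldCF I (foldCF I L0 l) l' :=
  List.foldl_append

lemma foldCF_sound (hsym : Symmetric I) {w w' : FreeMonoid A} (h : ConGen.Rel (swapRel I) w w') :
    ∀ L0 : List (Finset A), foldCF I L0 w.toList = foldCF I L0 w'.toList := by
  induction h with
  | of x y hxy =>
      obtain ⟨a, b, hab, rfl, rfl⟩ := hxy
      intro L0
      show foldCF I L0 [a, b] = foldCF I L0 [b, a]
      show insCF I b (insCF I a L0) = insCF I a (insCF I b L0)
      exact (insCF_comm hsym hab L0).symm
  | refl x => intro L0; rfl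
  | symm _ ih => intro L0; exact (ih L0).symm
  | trans _ _ ih1 ih2 => intro L0; exact (ih1 L0).trans (ih2 L0)
  | mul _ _ ih1 ih2 =>
      intro L0
      rw [FreeMonoid.toList_mul, FreeMonoid.toList_mul, foldCF_append, foldCF_append,
        ih1 L0, ih2]

/-- The Cartier–Foata normal form of a trace. -/
noncomputable def nfT (hsym : Symmetric I) (x : TraceMonoid A I) : List (Finset A) :=
  Quotient.liftOn x (fun w => foldCF I [] (FreeMonoid.toList w))
    (fun _ _ h => foldCF_sound hsym h [])

lemma nfT_mk (hsym : Symmetric I) (w : FreeMonoid A) :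
    nfT hsym ((traceCon I).mk' w) = foldCF I [] (FreeMonoid.toList w) := rfl

lemma nfT_mul_listProd (hsym : Symmetric I) (x : TraceMonoid A I) (l : List A) :
    nfT hsym (x * listProd I l) = foldCF I (nfT hsym x) l := by
  induction x using Con.induction_on with
  | _ w =>
      have h1 : (↑w : TraceMonoid A I) = (traceCon I).mk' w := rfl
      rw [h1, listProd_eq_mk, ← map_mul, nfT_mk, nfT_mk, FreeMonoid.toList_mul,
        FreeMonoid.toList_ofList, foldCF_append]

lemma nfT_one (hsym : Symmetric I) : nfT hsym (1 : TraceMonoid A I) = [] := rfl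

end CF2
section CF3

variable {A : Type*} {I : A → A → Prop}

/-- Validity of a Cartier–Foata sequence of cliques. -/
def ValidCF (I : A → A → Prop) (L : List (Finset A)) : Prop :=
  (∀ c ∈ L, c.Nonempty) ∧ (∀ c ∈ L, (↑c : Set A).Pairwise I) ∧ L.Chain' (NormalF I)

lemma validCF_nil : ValidCF I [] := by
  refine ⟨by simp, by simp, List.isChain_nil⟩

/-- Letters appearing in `insCF I a L` : `a` together with the letters of `L`. -/
lemma mem_insCF {a x : A} : ∀ {L : List (Finset A)} {c : Finset A},
    c ∈ insCF I a L → x ∈ c → x = a ∨ ∃ d ∈ L, x ∈ d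
  | [], c => by
      rw [insCF_nil]
      intro hc hx
      simp at hc
      subst hc
      simp at hx
      exact Or.inl hx
  | d :: L, c => by
      by_cases h : freeP I a (d :: L)
      · rw [insCF_pos h]
        intro hc hx
        rcases List.mem_cons.1 hc with rfl | hc
        · rcases Finset.mem_insert.1 hx with rfl | hx
          · exact Or.inl rfl
          · exact Or.inr ⟨d, by simp, hx⟩
        · exact Or.inr ⟨c, by simp [hc], hx⟩
      · rw [insCF_neg h]
        intro hc hx
        rcases List.mem_cons.1 hc with rfl | hc
        · exact Or.inr ⟨c, by simp, hx⟩
        · rcases mem_insCF hc hx with h1 | ⟨e, he, hxe⟩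
          · exact Or.inl h1
          · exact Or.inr ⟨e, by simp [he], hxe⟩

lemma head?_insCF (a : A) : ∀ L : List (Finset A),
    (insCF I a L).head? = some (if freeP I a L then insert a (L.headD ∅) else L.headD ∅)
  | [] => by
      rw [insCF_nil]
      simp [freeP_nil a]
  | c :: L => by
      by_cases h : freeP I a (c :: L)
      · rw [insCF_pos h]; simp [h]
      · rw [insCF_neg h]; simp [h]

lemma normalF_mono {c d : Finset A} (h : NormalF I c d) (e : Finset A) (hde : d ⊆ e → True) :
    True := trivial

lemma validCF_insCF (hsym : Symmetric I) (hirr : Irreflexive I) (a : A) :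
    ∀ L : List (Finset A), ValidCF I L → ValidCF I (insCF I a L)
  | [] => by
      intro _
      rw [insCF_nil]
      refine ⟨by simp, ?_, List.isChain_singleton _⟩
      intro c hc
      simp at hc
      subst hc
      simp [Set.Pairwise]
  | c :: L => by
      rintro ⟨hne, hpw, hch⟩
      by_cases h : freeP I a (c :: L)
      · rw [insCF_pos h]
        obtain ⟨hfc, hfL⟩ := freeP_cons.1 h
        refine ⟨?_, ?_, ?_⟩
        · intro d hd
          rcases List.mem_cons.1 hd with rfl | hd
          · exact ⟨a, Finset.mem_insert_self a c⟩
          · exact hne d (by simp [hd])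
        · intro d hd
          rcases List.mem_cons.1 hd with rfl | hd
          · intro x hx y hy hxy
            simp only [Finset.coe_insert, Set.mem_insert_iff, Finset.mem_coe] at hx hy
            rcases hx with rfl | hx
            · rcases hy with rfl | hy
              · exact absurd rfl hxy
              · exact hfc _ hy
            · rcases hy with rfl | hy
              · exact hsym (hfc _ hx)
              · exact hpw c (by simp) hx hy hxy
          · exact hpw d (by simp [hd]) 
        · unfold List.Chain' at hch ⊢; rw [List.isChain_cons] at hch ⊢
          refine ⟨?_, hch.2⟩
          intro y hy
          intro b hb
          obtain ⟨z, hz, hzb⟩ := hch.1 y hy b hb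
          exact ⟨z, Finset.mem_insert_of_mem hz, hzb⟩
      · rw [insCF_neg h]
        have hvL : ValidCF I L :=
          ⟨fun d hd => hne d (by simp [hd]), fun d hd => hpw d (by simp [hd]),
            (List.isChain_cons.1 hch).2⟩
        obtain ⟨ine, ipw, ich⟩ := validCF_insCF hsym hirr a L hvL
        refine ⟨?_, ?_, ?_⟩
        · intro d hd
          rcases List.mem_cons.1 hd with rfl | hd
          · exact hne d (by simp)
          · exact ine d hd
        · intro d hd
          rcases List.mem_cons.1 hd with rfl | hd
          · exact hpw d (by simp)
          · exact ipw d hd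
        · unfold List.Chain'; rw [List.isChain_cons]
          refine ⟨?_, ich⟩
          intro y hy
          rw [head?_insCF] at hy
          -- `y` is `insert a (L.headD ∅)` or `L.headD ∅`
          have hblock : freeP I a L → ∃ z ∈ c, ¬ I a z := by
            intro hfL
            rw [freeP_cons] at h
            have h2 : ¬ ∀ b ∈ c, I a b := fun hP => h ⟨hP, hfL⟩
            push_neg at h2
            exact h2
          by_cases hfL : freeP I a L
          · rw [if_pos hfL] at hy
            obtain ⟨z, hz, hnz⟩ := hblock hfL
            have hy' : y = insert a (L.headD ∅) := by simpa using hy.symm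
            subst hy'
            intro b hb
            rcases Finset.mem_insert.1 hb with rfl | hb
            · exact ⟨z, hz, Or.inl fun hI => hnz (hsym hI)⟩
            · -- b is in the old head of L
              cases L with
              | nil => simp at hb
              | cons d L' =>
                  have : NormalF I c d := by
                    unfold List.Chain' at hch; rw [List.isChain_cons_cons] at hch
                    exact hch.1
                  exact this b (by simpa using hb)
          · rw [if_neg hfL] at hy
            have hy' : y = L.headD ∅ := by simpa using hy.symm
            subst hy'
            cases L with
            | nil => exact absurd (freeP_nil a) hfL
            | cons d L' =>
                have : NormalF I c d := by
                  unfold List.Chain' at hch; rw [List.isChain_cons_cons] at hch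
                  exact hch.1
                simpa using this

/-- Product of a Cartier–Foata sequence. -/
noncomputable def prodCF (I : A → A → Prop) (L : List (Finset A)) : TraceMonoid A I :=
  (L.map (fprod I)).prod

lemma prodCF_nil : prodCF I [] = 1 := rfl

lemma prodCF_cons (c : Finset A) (L : List (Finset A)) :
    prodCF I (c :: L) = fprod I c * prodCF I L := by simp [prodCF]

lemma trOf_comm_prodCF {a : A} {L : List (Finset A)} (h : freeP I a L) :
    trOf I a * prodCF I L = prodCF I L * trOf I a := by
  induction L with
  | nil => simp [prodCF]
  | cons c L ih =>
      obtain ⟨hc, hL⟩ := freeP_cons.1 h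
      simp only [prodCF, List.map_cons, List.prod_cons] at ih ⊢
      rw [← mul_assoc, trOf_comm_fprod hc, mul_assoc, ih hL, ← mul_assoc]

lemma prodCF_insCF (hirr : Irreflexive I) (a : A) :
    ∀ L : List (Finset A), (∀ c ∈ L, (↑c : Set A).Pairwise I) →
      prodCF I (insCF I a L) = prodCF I L * trOf I a
  | [] => by
      intro _
      rw [insCF_nil]
      simp [prodCF, fprod, listProd]
  | c :: L => by
      intro hpw
      by_cases h : freeP I a (c :: L)
      · obtain ⟨hfc, hfL⟩ := freeP_cons.1 h
        rw [insCF_pos h, prodCF_cons, prodCF_cons,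
          fprod_insert hirr (hpw c (by simp)) hfc, mul_assoc, mul_assoc]
        congr 1
        exact trOf_comm_prodCF hfL
      · rw [insCF_neg h, prodCF_cons, prodCF_cons,
          prodCF_insCF hirr a L (fun d hd => hpw d (by simp [hd])), ← mul_assoc]

end CF3
section CF4

variable {A : Type*} {I : A → A → Prop}

lemma validCF_foldCF (hsym : Symmetric I) (hirr : Irreflexive I) (l : List A) :
    ∀ L0 : List (Finset A), ValidCF I L0 → ValidCF I (foldCF I L0 l) := by
  induction l with
  | nil => intro L0 h; exact h
  | cons a l ih =>
      intro L0 h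
      exact ih _ (validCF_insCF hsym hirr a L0 h)

lemma nfT_valid (hsym : Symmetric I) (hirr : Irreflexive I) (x : TraceMonoid A I) :
    ValidCF I (nfT hsym x) := by
  induction x using Con.induction_on with
  | _ w => exact validCF_foldCF hsym hirr _ [] validCF_nil

lemma prodCF_foldCF (hsym : Symmetric I) (hirr : Irreflexive I) (l : List A) :
    ∀ L0 : List (Finset A), ValidCF I L0 →
      prodCF I (foldCF I L0 l) = prodCF I L0 * listProd I l := by
  induction l with
  | nil => intro L0 h; simp [foldCF, listProd]
  | cons a l ih =>
      intro L0 h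
      have h1 : foldCF I L0 (a :: l) = foldCF I (insCF I a L0) l := rfl
      rw [h1, ih _ (validCF_insCF hsym hirr a L0 h), prodCF_insCF hirr a L0 h.2.1]
      have h2 : listProd I (a :: l) = trOf I a * listProd I l := by
        simp [listProd]
      rw [h2, ← mul_assoc]

lemma prod_nfT (hsym : Symmetric I) (hirr : Irreflexive I) (x : TraceMonoid A I) :
    prodCF I (nfT hsym x) = x := by
  induction x using Con.induction_on with
  | _ w =>
      have h1 : (↑w : TraceMonoid A I) = (traceCon I).mk' w := rfl
      rw [h1, nfT_mk]
      have := prodCF_foldCF hsym hirr (FreeMonoid.toList w) [] validCF_nil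
      rw [this, prodCF_nil, one_mul, listProd_eq_mk, FreeMonoid.ofList_toList]

end CF4
section CF5

variable {A : Type*} {I : A → A → Prop}

lemma insCF_last_new (hsym : Symmetric I) {b : A} {c : Finset A}
    (hbl : ∃ z ∈ c, ¬ I z b) :
    ∀ M : List (Finset A), insCF I b (M ++ [c]) = M ++ [c, {b}]
  | [] => by
      obtain ⟨z, hz, hnz⟩ := id hbl
      have h : ¬ freeP I b [c] := by
        intro h
        exact hnz (hsym (h c (by simp) z hz))
      rw [List.nil_append, insCF_neg h, insCF_nil]
      rfl
  | d :: M => by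
      obtain ⟨z, hz, hnz⟩ := id hbl
      have h : ¬ freeP I b (d :: (M ++ [c])) := by
        intro h
        exact hnz (hsym (h c (by simp) z hz))
      rw [List.cons_append, insCF_neg h, insCF_last_new hsym hbl M]
      rfl

lemma insCF_last_insert (hsym : Symmetric I) {b : A} {c e : Finset A}
    (hbl : ∃ z ∈ c, ¬ I z b) (hfr : ∀ z ∈ e, I b z) :
    ∀ M : List (Finset A), insCF I b (M ++ [c, e]) = M ++ [c, insert b e]
  | [] => by
      obtain ⟨z, hz, hnz⟩ := id hbl
      have h : ¬ freeP I b [c, e] := by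
        intro h
        exact hnz (hsym (h c (by simp) z hz))
      have h2 : freeP I b [e] := by
        intro d hd
        simp at hd
        subst hd
        exact hfr
      rw [List.nil_append, insCF_neg h, insCF_pos h2]
      rfl
  | d :: M => by
      obtain ⟨z, hz, hnz⟩ := id hbl
      have h : ¬ freeP I b (d :: (M ++ [c, e])) := by
        intro h
        exact hnz (hsym (h c (by simp) z hz))
      rw [List.cons_append, insCF_neg h, insCF_last_insert hsym hbl hfr M]
      rfl

lemma foldCF_clique_base (hsym : Symmetric I) (l : List A) (hl : IsCliqueList I l)
    (hne : l ≠ []) : foldCF I [] l = [l.toFinset] := by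
  induction l using List.reverseRecOn with
  | nil => exact absurd rfl hne
  | append_singleton l b ih =>
      rcases List.eq_nil_or_concat l with rfl | ⟨l', a, rfl⟩
      · simp [foldCF, insCF_nil]
      · set m := l'.concat a with hm
        have hml : m ≠ [] := by simp [hm]
        have hlm : IsCliqueList I m := hl.sublist (by simp)
        rw [foldCF_append, ih hlm hml]
        have hfr : freeP I b [m.toFinset] := by
          intro d hd
          simp only [List.mem_singleton] at hd
          subst hd
          intro z hz
          rw [List.mem_toFinset] at hz
          have := (List.pairwise_append.1 (by exact hl)).2.2 z hz b (by simp)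
          exact hsym this.2
        have hts : (m ++ [b]).toFinset = insert b m.toFinset := by
          ext x
          simp [or_comm]
        show insCF I b [m.toFinset] = _
        rw [insCF_pos hfr, hts]

lemma foldCF_clique_step (hsym : Symmetric I) {c : Finset A} (l : List A)
    (hl : IsCliqueList I l) (hne : l ≠ [])
    (hbl : ∀ b ∈ l, ∃ z ∈ c, ¬ I z b) (M : List (Finset A)) :
    foldCF I (M ++ [c]) l = M ++ [c, l.toFinset] := by
  induction l using List.reverseRecOn with
  | nil => exact absurd rfl hne
  | append_singleton l b ih =>
      rcases List.eq_nil_or_concat l with rfl | ⟨l', a, rfl⟩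
      · show insCF I b (M ++ [c]) = _
        have hts : (([] : List A) ++ [b]).toFinset = {b} := by simp
        rw [insCF_last_new hsym (hbl b (by simp)) M, hts]
      · set m := l'.concat a with hm
        have hml : m ≠ [] := by simp [hm]
        have hlm : IsCliqueList I m := hl.sublist (by simp)
        rw [foldCF_append, ih hlm hml (fun x hx => hbl x (by simp [hx]))]
        have hfr : ∀ z ∈ m.toFinset, I b z := by
          intro z hz
          rw [List.mem_toFinset] at hz
          have := (List.pairwise_append.1 (by exact hl)).2.2 z hz b (by simp)
          exact hsym this.2
        have hts : (m ++ [b]).toFinset = insert b m.toFinset := by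
          ext x
          simp [or_comm]
        show insCF I b (M ++ [c, m.toFinset]) = _
        rw [insCF_last_insert hsym (hbl b (by simp)) hfr M, hts]

/-- Reconstruction: the normal form of the product of a valid sequence is that sequence. -/
lemma nfT_prodCF (hsym : Symmetric I) (hirr : Irreflexive I) (F : List (Finset A))
    (hF : ValidCF I F) : nfT hsym (prodCF I F) = F := by
  induction F using List.reverseRecOn with
  | nil =>
      show nfT hsym 1 = []
      exact nfT_one hsym
  | append_singleton G c ih =>
      obtain ⟨hne, hpw, hch⟩ := hF
      have hG : ValidCF I G :=
        ⟨fun d hd => hne d (by simp [hd]), fun d hd => hpw d (by simp [hd]),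
          (List.isChain_append.1 hch).1⟩
      have hcp : (↑c : Set A).Pairwise I := hpw c (by simp)
      have hcn : c.Nonempty := hne c (by simp)
      have hcl : IsCliqueList I c.toList := by
        refine List.Pairwise.imp_of_mem ?_ (Finset.nodup_toList c)
        intro x y hx hy hxy
        exact ⟨hxy, hcp (Finset.mem_toList.1 hx) (Finset.mem_toList.1 hy) hxy⟩
      have hctl : c.toList ≠ [] := by
        intro h
        rcases hcn with ⟨x, hx⟩
        rw [← Finset.mem_toList, h] at hx
        simp at hx
      have hsp : prodCF I (G ++ [c]) = prodCF I G * listProd I c.toList := by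
        simp [prodCF, fprod]
      rw [hsp, nfT_mul_listProd, ih hG]
      rcases List.eq_nil_or_concat G with rfl | ⟨M, d, rfl⟩
      · rw [List.nil_append, foldCF_clique_base hsym c.toList hcl hctl,
          Finset.toList_toFinset]
      · have hnd : NormalF I d c := by
          have := (List.isChain_append.1 hch).2.2
          exact this d (by simp) c (by simp)
        have hbl : ∀ b ∈ c.toList, ∃ z ∈ d, ¬ I z b := by
          intro b hb
          obtain ⟨z, hz, hzb⟩ := hnd b (Finset.mem_toList.1 hb)
          rcases hzb with hzb | rfl
          · exact ⟨z, hz, hzb⟩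
          · exact ⟨z, hz, fun h => hirr z h⟩
        have : M.concat d = M ++ [d] := by simp
        rw [this, foldCF_clique_step hsym c.toList hcl hctl hbl M,
          Finset.toList_toFinset]
        simp

end CF5
section CF6

variable {A : Type*} {I : A → A → Prop}

lemma toList_isCliqueList {c : Finset A} (hcp : (↑c : Set A).Pairwise I) :
    IsCliqueList I c.toList := by
  refine List.Pairwise.imp_of_mem ?_ (Finset.nodup_toList c)
  intro x y hx hy hxy
  exact ⟨hxy, hcp (Finset.mem_toList.1 hx) (Finset.mem_toList.1 hy) hxy⟩

lemma cliqueList_set_pairwise (hsym : Symmetric I) {l : List A} (hl : IsCliqueList I l) :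
    (↑l.toFinset : Set A).Pairwise I := by
  intro x hx y hy hxy
  simp only [Finset.coe_sort_coe, List.coe_toFinset, Set.mem_setOf_eq] at hx hy
  have hS : Symmetric fun a b : A => a ≠ b ∧ I a b := by
    intro a b ⟨h1, h2⟩
    exact ⟨h1.symm, hsym h2⟩
  exact (haveI : Std.Symm (fun a b : A => a ≠ b ∧ I a b) := ⟨fun _ _ h => hS h⟩; List.Pairwise.forall hl hx hy hxy).2

lemma fprod_toFinset (hsym : Symmetric I) {l : List A} (hl : IsCliqueList I l) :
    fprod I l.toFinset = listProd I l := by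
  have hnd : l.Nodup := hl.imp fun h => h.1
  have hperm : l.toFinset.toList.Perm l := List.toFinset_toList hnd
  have hS : Symmetric fun a b : A => a ≠ b ∧ I a b := by
    intro a b ⟨h1, h2⟩
    exact ⟨h1.symm, hsym h2⟩
  have hpw : l.toFinset.toList.Pairwise fun a b => I a b ∨ I b a := by
    refine List.Pairwise.imp_of_mem ?_ (Finset.nodup_toList _)
    intro x y hx hy hxy
    rw [Finset.mem_toList, List.mem_toFinset] at hx hy
    exact Or.inl (haveI : Std.Symm (fun a b : A => a ≠ b ∧ I a b) := ⟨fun _ _ h => hS h⟩; List.Pairwise.forall hl hx hy hxy).2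
  exact listProd_perm hperm hpw

lemma unique_aux (hsym : Symmetric I) :
    ∀ L : List (TraceMonoid A I), (∀ c ∈ L, IsClique I c ∧ c ≠ 1) →
      L.Chain' (NormalPairM I) →
      ∃ F : List (Finset A), ValidCF I F ∧ F.map (fprod I) = L ∧ prodCF I F = L.prod
  | [] => fun _ _ => ⟨[], validCF_nil, rfl, rfl⟩
  | c :: L => by
      intro hcl hch
      obtain ⟨F, hvF, hmap, hpF⟩ :=
        unique_aux hsym L (fun d hd => hcl d (by simp [hd])) ((List.isChain_cons.1 hch).2)
      obtain ⟨⟨l, hl, hc⟩, hc1⟩ := hcl c (by simp)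
      have hlne : l ≠ [] := by
        rintro rfl
        exact hc1 (by simpa [listProd] using hc)
      refine ⟨l.toFinset :: F, ?_, ?_, ?_⟩
      · obtain ⟨hFne, hFpw, hFch⟩ := hvF
        refine ⟨?_, ?_, ?_⟩
        · intro d hd
          rcases List.mem_cons.1 hd with rfl | hd
          · exact (List.toFinset_nonempty_iff l).2 hlne
          · exact hFne d hd
        · intro d hd
          rcases List.mem_cons.1 hd with rfl | hd
          · exact cliqueList_set_pairwise hsym hl
          · exact hFpw d hd
        · unfold List.Chain'; rw [List.isChain_cons]
          refine ⟨?_, hFch⟩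
          intro f hf
          -- `f` is the head of `F`; its `fprod` is the head of `L`
          cases F with
          | nil => simp at hf
          | cons f' F' =>
              simp only [List.head?_cons, Option.mem_def, Option.some_inj] at hf
              subst hf
              cases L with
              | nil => simp at hmap
              | cons d L' =>
                  have hfd : fprod I f' = d := by
                    simp only [List.map_cons, List.cons.injEq] at hmap
                    exact hmap.1
                  have hnp : NormalPairM I c d := (List.isChain_cons_cons.1 hch).1
                  obtain ⟨l₁, l₂, hl₁, hl₂, hc₁, hd₂, hprop⟩ := hnp
                  -- membership transfers
                  have hm1 : ∀ a, a ∈ l₁ ↔ a ∈ l :=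
                    fun a => mem_of_listProd_eq (hc₁.symm.trans hc) a
                  have hm2 : ∀ b, b ∈ f'.toList ↔ b ∈ l₂ := by
                    intro b
                    refine mem_of_listProd_eq (I := I) ?_ b
                    have : fprod I f' = listProd I f'.toList := rfl
                    rw [← this, hfd, hd₂]
                  intro b hb
                  have hb2 : b ∈ l₂ := (hm2 b).1 (Finset.mem_toList.2 hb)
                  obtain ⟨a, ha, hab⟩ := hprop b hb2
                  exact ⟨a, List.mem_toFinset.2 ((hm1 a).1 ha), hab⟩
      · simp only [List.map_cons, hmap, List.cons.injEq]
        exact ⟨(fprod_toFinset hsym hl).trans hc.symm, trivial⟩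
      · rw [prodCF_cons, hpF, List.prod_cons, fprod_toFinset hsym hl, ← hc]

lemma chain'_map_mem {α β : Type*} {R : α → α → Prop} {S : β → β → Prop} {f : α → β} :
    ∀ {l : List α}, (∀ a ∈ l, ∀ b ∈ l, R a b → S (f a) (f b)) → l.Chain' R →
      (l.map f).Chain' S
  | [] => fun _ _ => List.isChain_nil
  | [a] => fun _ _ => List.isChain_singleton _
  | a :: b :: l => fun h hch => by
      unfold List.Chain'; rw [List.map_cons, List.map_cons, List.isChain_cons_cons]
      unfold List.Chain' at hch; rw [List.isChain_cons_cons] at hch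
      refine ⟨h a (by simp) b (by simp) hch.1, ?_⟩
      rw [← List.map_cons]
      exact chain'_map_mem
        (fun x hx y hy => h x (List.mem_cons_of_mem a hx) y (List.mem_cons_of_mem a hy)) hch.2

end CF6
/-- every nonempty trace has a unique Cartier–Foata normal form: a
unique nonempty sequence of nonempty cliques, consecutively normal, with product `x`. -/
theorem stmt3 {A : Type*} [Fintype A] {I : A → A → Prop}
    (hsym : Symmetric I) (hirr : Irreflexive I)
    (x : TraceMonoid A I) (hx : x ≠ 1) :
    ∃! L : List (TraceMonoid A I),
      L ≠ [] ∧ (∀ c ∈ L, IsClique I c ∧ c ≠ 1) ∧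
      L.Chain' (NormalPairM I) ∧ L.prod = x := by
  classical
  set N := nfT hsym x with hN
  obtain ⟨hNne, hNpw, hNch⟩ := nfT_valid hsym hirr x
  have hNprod : prodCF I N = x := prod_nfT hsym hirr x
  refine ⟨N.map (fprod I), ⟨?_, ?_, ?_, ?_⟩, ?_⟩
  · -- nonempty
    intro h
    rw [List.map_eq_nil_iff] at h
    rw [h] at hNprod
    exact hx (hNprod.symm.trans rfl)
  · -- cliques, nonidentity
    intro c hc
    rw [List.mem_map] at hc
    obtain ⟨e, he, rfl⟩ := hc
    have hecl : IsCliqueList I e.toList := toList_isCliqueList (hNpw e he)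
    have hetl : e.toList ≠ [] := by
      intro h
      rcases hNne e he with ⟨y, hy⟩
      rw [← Finset.mem_toList, h] at hy
      simp at hy
    exact ⟨⟨e.toList, hecl, rfl⟩, listProd_ne_one hetl⟩
  · -- chain
    refine chain'_map_mem ?_ hNch
    intro d hd e he hnf
    refine ⟨d.toList, e.toList, toList_isCliqueList (hNpw d hd),
      toList_isCliqueList (hNpw e he), rfl, rfl, ?_⟩
    intro b hb
    obtain ⟨a, ha, hab⟩ := hnf b (Finset.mem_toList.1 hb)
    exact ⟨a, Finset.mem_toList.2 ha, hab⟩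
  · exact hNprod
  · -- uniqueness
    rintro L ⟨hLne, hLcl, hLch, hLpr⟩
    obtain ⟨F, hvF, hmap, hpF⟩ := unique_aux hsym L hLcl hLch
    have hFN : N = F := by
      rw [hN, ← hLpr, ← hpF]
      exact nfT_prodCF hsym hirr F hvF
    rw [hFN, hmap]
end
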